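/- Let a, b, c, e ∈ ℂ with Re(e − a − b) > 0 and with e, c, a+b+c−e+1 not nonpositive integers. Then lim_{n→∞} ∑_{k=0}^∞ (a)_k (b)_k (c+n)_k / ((e)_k (a+b+c−e+1+n)_k · k!) = ∑_{k=0}^∞ (a)_k (b)_k / ((e)_k · k!), where all series involved converge absolutely. -/

import Mathlib

open Complex Filter

/-- Pochhammer symbol `(a)_k = a (a+1) ⋯ (a+k-1)`. -/
noncomputable def poch (a : ℂ) (k : ℕ) : ℂ := ∏ i ∈ Finset.range k, (a + i)

-- lemma l1
lemma norm_add_nat_sub (α : ℂ) :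
    Tendsto (fun k : ℕ => ‖α + (k:ℂ)‖ - k) atTop (nhds α.re) := by
  have hnorm : Tendsto (fun k : ℕ => ‖α + (k:ℂ)‖ / k) atTop (nhds 1) := by
    have h0 : Tendsto (fun k : ℕ => α / (k:ℂ) + 1) atTop (nhds 1) := by
      have : Tendsto (fun k : ℕ => α / (k:ℂ)) atTop (nhds 0) := by
        apply tendsto_zero_iff_norm_tendsto_zero.2
        simp only [norm_div, Complex.norm_natCast]
        exact Tendsto.div_atTop tendsto_const_nhds
          (tendsto_natCast_atTop_atTop)
      simpa using this.add tendsto_const_nhds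
    have := (continuous_norm.tendsto (1:ℂ)).comp h0
    simp only [Function.comp, norm_one] at this
    apply this.congr'
    filter_upwards [eventually_gt_atTop 0] with k hk
    have hk' : (k:ℂ) ≠ 0 := Nat.cast_ne_zero.2 hk.ne'
    simp only [Function.comp]
    rw [div_add' _ _ _ hk', norm_div, Complex.norm_natCast, one_mul]
  -- now main computation
  have key : Tendsto (fun k : ℕ => (2 * α.re + ‖α‖^2 / k) / (‖α + (k:ℂ)‖/k + 1))
      atTop (nhds α.re) := by
    have hnum : Tendsto (fun k : ℕ => 2 * α.re + ‖α‖^2 / k) atTop (nhds (2*α.re)) := by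
      simpa using tendsto_const_nhds.add
        (Tendsto.div_atTop (tendsto_const_nhds (x := ‖α‖^2)) tendsto_natCast_atTop_atTop)
    have hden : Tendsto (fun k : ℕ => ‖α + (k:ℂ)‖/k + 1) atTop (nhds 2) := by
      have := hnorm.add (tendsto_const_nhds (x := (1:ℝ)))
      norm_num at this; exact this
    have := hnum.div hden (by norm_num)
    convert this using 2
    · rfl
    · ring
  apply key.congr'
  filter_upwards [eventually_gt_atTop (Nat.ceil ‖α‖)] with k hk
  have hk0 : (0:ℝ) < k := Nat.cast_pos.2 (Nat.lt_of_le_of_lt (Nat.zero_le _) hk)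
  have hpos : (0:ℝ) < ‖α + (k:ℂ)‖ + k := by
    have := norm_nonneg (α + (k:ℂ)); linarith
  have hsq : ‖α + (k:ℂ)‖^2 = k^2 + (2*α.re*k + ‖α‖^2) := by
    rw [Complex.sq_norm, Complex.sq_norm]
    simp [Complex.normSq_apply]
    ring
  have : (‖α + (k:ℂ)‖ - k) * (‖α + (k:ℂ)‖ + k) = 2*α.re*k + ‖α‖^2 := by
    ring_nf
    nlinarith [hsq]
  have heq : ‖α + (k:ℂ)‖ - k = (2*α.re*k + ‖α‖^2)/(‖α + (k:ℂ)‖ + k) := by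
    field_simp at this ⊢
    linarith [this]
  rw [heq]
  field_simp

lemma eventual_ratio_bound (r : ℕ → ℝ) (p L : ℝ) (hp : 1 ≤ p)
    (hL : Tendsto (fun k : ℕ => (k:ℝ) * (r k - 1)) atTop (nhds L)) (hLp : L < -p) :
    ∀ᶠ k in atTop, r k ≤ ((k:ℝ)/(k+1))^p := by
  have h1 : ∀ᶠ k : ℕ in atTop, (k:ℝ) * (r k - 1) < -p :=
    hL.eventually (eventually_lt_nhds hLp)
  filter_upwards [h1, eventually_gt_atTop 0] with k hk hk0
  have hk0' : (0:ℝ) < k := Nat.cast_pos.2 hk0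
  have hr : r k ≤ 1 - p/(k+1) := by
    have h2 : r k - 1 < -(p/k) := by
      rw [lt_neg, div_lt_iff₀ hk0']
      nlinarith
    have h3 : -(p/(k:ℝ)) ≤ -(p/(k+1)) := by
      rw [neg_le_neg_iff, div_le_div_iff₀ (by linarith) hk0']
      nlinarith
    linarith
  have hbern : 1 - p/(k+1) ≤ ((k:ℝ)/(k+1))^p := by
    have h3 : (-1:ℝ) ≤ -(1/(k+1)) := by
      rw [neg_le_neg_iff]
      apply div_le_one_of_le₀ <;> linarith
    have := one_add_mul_self_le_rpow_one_add h3 hp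
    have he : (1:ℝ) + -(1/(k+1)) = (k:ℝ)/(k+1) := by field_simp; ring
    rw [he] at this
    calc 1 - p/(k+1) = 1 + p * -(1/(k+1)) := by ring
    _ ≤ _ := this
  linarith

lemma summable_of_eventual_ratio (u : ℕ → ℝ) (hu : ∀ k, 0 ≤ u k) (p : ℝ) (hp : 1 < p)
    (h : ∀ᶠ k in atTop, u (k+1) ≤ u k * ((k:ℝ)/(k+1))^p) : Summable u := by
  obtain ⟨K, hK⟩ := h.exists_forall_of_atTop
  set K' := K + 1 with hK'
  have key : ∀ k, K' ≤ k → u k * (k:ℝ)^p ≤ u K' * (K':ℝ)^p := by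
    intro k hk
    induction k with
    | zero => exact absurd hk (by omega)
    | succ m ih =>
      rcases Nat.lt_or_ge m K' with hm | hm
      · have : m + 1 = K' := by omega
        rw [this]
      · have hm0 : (0:ℝ) < m := by
          have : 0 < m := by omega
          exact_mod_cast this
        have h1 := hK m (by omega)
        have h2 : u (m+1) * ((m:ℝ)+1)^p ≤ u m * (m:ℝ)^p := by
          have := mul_le_mul_of_nonneg_right h1
            (le_of_lt (Real.rpow_pos_of_pos (show (0:ℝ) < (m:ℝ)+1 by linarith) p))
          calc u (m+1) * ((m:ℝ)+1)^p ≤ u m * ((m:ℝ)/(m+1))^p * ((m:ℝ)+1)^p := this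
          _ = u m * (m:ℝ)^p := by
              rw [Real.div_rpow (le_of_lt hm0) (by linarith), mul_assoc,
                div_mul_cancel₀]
              exact (Real.rpow_pos_of_pos (by linarith) p).ne'
        have hc : ((m+1:ℕ):ℝ) = (m:ℝ)+1 := by push_cast; ring
        rw [hc]
        exact le_trans h2 (ih hm)
  apply Summable.of_norm_bounded_eventually_nat (g := fun k => (u K' * (K':ℝ)^p) * ((k:ℝ)^p)⁻¹)
  · exact Summable.mul_left _ (Real.summable_nat_rpow_inv.2 hp)
  · filter_upwards [eventually_ge_atTop K'] with k hk
    have hk0 : (0:ℝ) < (k:ℝ)^p := Real.rpow_pos_of_pos (by exact_mod_cast Nat.lt_of_lt_of_le (Nat.succ_pos K) hk) p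
    rw [Real.norm_of_nonneg (hu k)]
    calc u k = u k * (k:ℝ)^p * ((k:ℝ)^p)⁻¹ := by field_simp
    _ ≤ (u K' * (K':ℝ)^p) * ((k:ℝ)^p)⁻¹ :=
        mul_le_mul_of_nonneg_right (key k hk) (inv_nonneg.2 hk0.le)

lemma tendsto_ratio_aux (x y z : ℂ) (q : ℕ → ℝ) (Lq : ℝ)
    (hq : Tendsto (fun k : ℕ => (k:ℝ) * (q k - 1)) atTop (nhds Lq)) :
    Tendsto (fun k : ℕ => (k:ℝ) *
        (‖x+(k:ℂ)‖ * ‖y+(k:ℂ)‖ * q k / (‖z+(k:ℂ)‖ * ((k:ℝ)+1)) - 1))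
      atTop (nhds (x.re + y.re - z.re - 1 + Lq)) := by
  set X : ℕ → ℝ := fun k => ‖x+(k:ℂ)‖ - k with hXdef
  set Y : ℕ → ℝ := fun k => ‖y+(k:ℂ)‖ - k with hYdef
  set Z : ℕ → ℝ := fun k => ‖z+(k:ℂ)‖ - k with hZdef
  have hX : Tendsto X atTop (nhds x.re) := norm_add_nat_sub x
  have hY : Tendsto Y atTop (nhds y.re) := norm_add_nat_sub y
  have hZ : Tendsto Z atTop (nhds z.re) := norm_add_nat_sub z
  have hinv : Tendsto (fun k : ℕ => 1/(k:ℝ)) atTop (nhds 0) :=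
    tendsto_one_div_atTop_nhds_zero_nat
  have hXk : Tendsto (fun k : ℕ => X k / k) atTop (nhds 0) := by
    have := hX.mul hinv
    rw [mul_zero] at this
    exact this.congr (fun k => by rw [mul_one_div])
  have hYk : Tendsto (fun k : ℕ => Y k / k) atTop (nhds 0) := by
    have := hY.mul hinv
    rw [mul_zero] at this
    exact this.congr (fun k => by rw [mul_one_div])
  have hZk : Tendsto (fun k : ℕ => Z k / k) atTop (nhds 0) := by
    have := hZ.mul hinv
    rw [mul_zero] at this
    exact this.congr (fun k => by rw [mul_one_div])
  have hXYZk : Tendsto (fun k : ℕ => (X k * Y k - Z k)/k) atTop (nhds 0) := by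
    have := ((hX.mul hY).sub hZ).mul hinv
    rw [mul_zero] at this
    exact this.congr (fun k => by rw [mul_one_div])
  have key : Tendsto (fun k : ℕ =>
      ((1 + X k/k) * (1 + Y k/k) * ((k:ℝ)*(q k - 1)) + (X k + Y k - Z k - 1)
        + (X k * Y k - Z k)/k) / ((1 + Z k/k) * (1 + 1/k)))
      atTop (nhds (x.re + y.re - z.re - 1 + Lq)) := by
    have hnum : Tendsto (fun k : ℕ =>
        (1 + X k/k) * (1 + Y k/k) * ((k:ℝ)*(q k - 1)) + (X k + Y k - Z k - 1)
          + (X k * Y k - Z k)/k) atTop (nhds (Lq + (x.re + y.re - z.re - 1) + 0)) := by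
      apply Tendsto.add
      apply Tendsto.add
      · have h1 : Tendsto (fun k : ℕ => (1 + X k/k) * (1 + Y k/k)) atTop (nhds 1) := by
          have := ((tendsto_const_nhds (x := (1:ℝ))).add hXk).mul
            ((tendsto_const_nhds (x := (1:ℝ))).add hYk)
          norm_num at this; exact this
        have := h1.mul hq
        rw [one_mul] at this; exact this
      · have := ((hX.add hY).sub hZ).sub (tendsto_const_nhds (x := (1:ℝ)))
        exact this
      · exact hXYZk
    have hden : Tendsto (fun k : ℕ => (1 + Z k/k) * (1 + 1/(k:ℝ))) atTop (nhds 1) := by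
      have := ((tendsto_const_nhds (x := (1:ℝ))).add hZk).mul
        ((tendsto_const_nhds (x := (1:ℝ))).add hinv)
      norm_num at this; simpa [one_div] using this
    have := hnum.div hden (by norm_num)
    rw [div_one] at this
    convert this using 2
    · rfl
    · ring
  apply key.congr'
  filter_upwards [eventually_gt_atTop (Nat.ceil ‖z‖)] with k hk
  have hk0 : (0:ℝ) < k := Nat.cast_pos.2 (Nat.lt_of_le_of_lt (Nat.zero_le _) hk)
  have hzk : (0:ℝ) < ‖z+(k:ℂ)‖ := by
    have h1 : ‖z‖ < k := lt_of_le_of_lt (Nat.le_ceil _) (by exact_mod_cast hk)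
    have h2 : (k:ℝ) - ‖z‖ ≤ ‖z+(k:ℂ)‖ := by
      have := norm_sub_norm_le ((k:ℂ)) (-z)
      rw [sub_neg_eq_add, norm_neg, Complex.norm_natCast, add_comm] at this
      exact this
    linarith
  have hx' : ‖x+(k:ℂ)‖ = (k:ℝ) + X k := by simp [hXdef]
  have hy' : ‖y+(k:ℂ)‖ = (k:ℝ) + Y k := by simp [hYdef]
  have hz' : ‖z+(k:ℂ)‖ = (k:ℝ) + Z k := by simp [hZdef]
  rw [hx', hy', hz']
  have hzZ : (k:ℝ) + Z k ≠ 0 := by rw [← hz']; exact hzk.ne'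
  field_simp
  ring

lemma q_ratio_tendsto (c' d' : ℂ) (hd : ∀ k : ℕ, d' + (k:ℂ) ≠ 0) :
    Tendsto (fun k : ℕ => (k:ℝ) * (‖c'+(k:ℂ)‖/‖d'+(k:ℂ)‖ - 1)) atTop
      (nhds (c'.re - d'.re)) := by
  set U : ℕ → ℝ := fun k => ‖c'+(k:ℂ)‖ - k with hUdef
  set V : ℕ → ℝ := fun k => ‖d'+(k:ℂ)‖ - k with hVdef
  have hU : Tendsto U atTop (nhds c'.re) := norm_add_nat_sub c'
  have hV : Tendsto V atTop (nhds d'.re) := norm_add_nat_sub d'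
  have hinv : Tendsto (fun k : ℕ => 1/(k:ℝ)) atTop (nhds 0) :=
    tendsto_one_div_atTop_nhds_zero_nat
  have hVk : Tendsto (fun k : ℕ => V k / k) atTop (nhds 0) := by
    have := hV.mul hinv
    rw [mul_zero] at this
    exact this.congr (fun k => by rw [mul_one_div])
  have hfrac : Tendsto (fun k : ℕ => (k:ℝ)/((k:ℝ) + V k)) atTop (nhds 1) := by
    have h1 : Tendsto (fun k : ℕ => 1/(1 + V k/k)) atTop (nhds 1) := by
      have := (tendsto_const_nhds (x := (1:ℝ))).div
        ((tendsto_const_nhds (x := (1:ℝ))).add hVk) (by norm_num)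
      norm_num at this; exact this
    apply h1.congr'
    filter_upwards [eventually_gt_atTop 0] with k hk
    have hk0 : (0:ℝ) < k := Nat.cast_pos.2 hk
    have hd0 : (0:ℝ) < (k:ℝ) + V k := by
      have : ‖d'+(k:ℂ)‖ = (k:ℝ) + V k := by simp [hVdef]
      rw [← this]
      exact norm_pos_iff.2 (hd k)
    field_simp
  have key : Tendsto (fun k : ℕ => (U k - V k) * ((k:ℝ)/((k:ℝ) + V k))) atTop
      (nhds (c'.re - d'.re)) := by
    have := (hU.sub hV).mul hfrac
    rw [mul_one] at this; exact this
  apply key.congr'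
  filter_upwards [eventually_gt_atTop 0] with k hk
  have hk0 : (0:ℝ) < k := Nat.cast_pos.2 hk
  have hv : ‖d'+(k:ℂ)‖ = (k:ℝ) + V k := by simp [hVdef]
  have hu : ‖c'+(k:ℂ)‖ = (k:ℝ) + U k := by simp [hUdef]
  have hd0 : (0:ℝ) < (k:ℝ) + V k := by rw [← hv]; exact norm_pos_iff.2 (hd k)
  rw [hu, hv]
  field_simp
  ring

lemma q_poly_tendsto (ρ B : ℝ) :
    Tendsto (fun k : ℕ => (k:ℝ) * ((1 + ρ/((k:ℝ)+1) + B/((k:ℝ)+1)^2) - 1)) atTop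
      (nhds ρ) := by
  have h1 : Tendsto (fun k : ℕ => (k:ℝ)/((k:ℝ)+1)) atTop (nhds 1) :=
    tendsto_natCast_div_add_atTop (1:ℝ)
  have h2 : Tendsto (fun k : ℕ => 1/((k:ℝ)+1)) atTop (nhds 0) :=
    tendsto_one_div_add_atTop_nhds_zero_nat
  have key : Tendsto (fun k : ℕ => ρ * ((k:ℝ)/((k:ℝ)+1))
      + B * (((k:ℝ)/((k:ℝ)+1)) * (1/((k:ℝ)+1)))) atTop (nhds ρ) := by
    have := (tendsto_const_nhds (x := ρ)).mul h1 |>.add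
      ((tendsto_const_nhds (x := B)).mul (h1.mul h2))
    norm_num at this; simpa [one_div] using this
  apply key.congr
  intro k
  have hk1 : ((k:ℝ)+1) ≠ 0 := by positivity
  field_simp
  ring

set_option maxHeartbeats 1000000 in
lemma factor_bound (w d : ℂ) (n i : ℕ) (h : ‖d‖ + ((i:ℝ)+1) ≤ (n:ℝ) + i) :
    ‖((d + w) + (n:ℂ) + (i:ℂ))/(d + (n:ℂ) + (i:ℂ))‖ ≤
      1 + (max w.re 0)/((i:ℝ)+1) +
        (max w.re 0 * ‖d‖ + ‖w‖*‖d‖ + ‖w‖^2/2)/((i:ℝ)+1)^2 := by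
  set ρ := max w.re 0 with hρ
  set B := ρ * ‖d‖ + ‖w‖*‖d‖ + ‖w‖^2/2 with hB
  set z : ℂ := d + (n:ℂ) + (i:ℂ) with hz
  have hi1 : (0:ℝ) < (i:ℝ)+1 := by positivity
  have hzn : ((i:ℝ)+1) ≤ ‖z‖ := by
    have h1 : ((n:ℝ)+i) - ‖d‖ ≤ ‖z‖ := by
      have := norm_sub_norm_le ((n:ℂ)+(i:ℂ)) (-d)
      rw [sub_neg_eq_add, norm_neg] at this
      have hnn : ‖(n:ℂ)+(i:ℂ)‖ = (n:ℝ)+i := by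
        rw [show ((n:ℂ)+(i:ℂ)) = (((n+i:ℕ)):ℂ) by push_cast; ring, Complex.norm_natCast]
        push_cast; ring
      rw [hnn] at this
      calc ((n:ℝ)+i) - ‖d‖ ≤ ‖(n:ℂ)+(i:ℂ)+d‖ := this
      _ = ‖z‖ := by rw [hz]; ring_nf
    linarith
  have hz0 : (0:ℝ) < ‖z‖ := lt_of_lt_of_le hi1 hzn
  have hzne : z ≠ 0 := norm_pos_iff.1 hz0
  have hratio : ((d + w) + (n:ℂ) + (i:ℂ))/z = 1 + w/z := by
    field_simp [hz]
    ring
  rw [hratio]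
  set u : ℂ := w/z with hu
  have hρ0 : 0 ≤ ρ := le_max_right _ _
  have hB0 : 0 ≤ B := by
    rw [hB]
    have := norm_nonneg w; have := norm_nonneg d
    positivity
  -- bound on u.re
  have hure : u.re ≤ ρ/((i:ℝ)+1) + (ρ*‖d‖ + ‖w‖*‖d‖)/((i:ℝ)+1)^2 := by
    have hdiv : u.re = (w.re * z.re + w.im * z.im)/Complex.normSq z := by
      rw [hu, Complex.div_re, ← add_div]
    have hzre : z.re = d.re + ((n:ℝ)+i) := by simp [hz]; ring
    have hzim : z.im = d.im := by simp [hz]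
    have hnum : w.re * z.re + w.im * z.im ≤ ρ*‖z‖ + (ρ*‖d‖ + ‖w‖*‖d‖) := by
      have h1 : w.re * z.re + w.im * z.im
          = w.re * ((n:ℝ)+i) + (w.re * d.re + w.im * d.im) := by
        rw [hzre, hzim]; ring
      have h2 : w.re * d.re + w.im * d.im ≤ ‖w‖*‖d‖ := by
        have h3 : (w * (starRingEnd ℂ) d).re = w.re * d.re + w.im * d.im := by
          simp [Complex.mul_re, Complex.conj_re, Complex.conj_im]
        have h4 := Complex.re_le_norm (w * (starRingEnd ℂ) d)
        rw [h3] at h4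
        calc w.re * d.re + w.im * d.im ≤ ‖w * (starRingEnd ℂ) d‖ := h4
        _ = ‖w‖*‖d‖ := by
            rw [norm_mul, Complex.norm_conj]
      have h5 : w.re * ((n:ℝ)+i) ≤ ρ * (‖z‖ + ‖d‖) := by
        have h6 : w.re ≤ ρ := le_max_left _ _
        have h7 : (0:ℝ) ≤ (n:ℝ)+i := by positivity
        have h8 : ((n:ℝ)+i) ≤ ‖z‖ + ‖d‖ := by
          have := norm_add_le ((n:ℂ)+(i:ℂ) + d) (-d)
          simp only [add_neg_cancel_right, norm_neg] at this
          have hnn : ‖(n:ℂ)+(i:ℂ)‖ = (n:ℝ)+i := by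
            rw [show ((n:ℂ)+(i:ℂ)) = (((n+i:ℕ)):ℂ) by push_cast; ring, Complex.norm_natCast]
            push_cast; ring
          rw [hnn] at this
          calc ((n:ℝ)+i) ≤ ‖(n:ℂ)+(i:ℂ)+d‖ + ‖d‖ := this
          _ = ‖z‖ + ‖d‖ := by rw [hz]; ring_nf
        calc w.re * ((n:ℝ)+i) ≤ ρ * ((n:ℝ)+i) := by nlinarith
        _ ≤ ρ * (‖z‖ + ‖d‖) := by nlinarith
      rw [h1]
      nlinarith
    rw [hdiv]
    have hns : Complex.normSq z = ‖z‖^2 := by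
      rw [Complex.normSq_eq_norm_sq]
    rw [hns]
    have hK : 0 ≤ ρ*‖d‖ + ‖w‖*‖d‖ := by
      have := norm_nonneg w; have := norm_nonneg d; positivity
    calc (w.re * z.re + w.im * z.im)/‖z‖^2 ≤ (ρ*‖z‖ + (ρ*‖d‖ + ‖w‖*‖d‖))/‖z‖^2 := by
          apply div_le_div_of_nonneg_right hnum (by positivity)
    _ ≤ ρ/((i:ℝ)+1) + (ρ*‖d‖ + ‖w‖*‖d‖)/((i:ℝ)+1)^2 := by
        rw [div_add_div _ _ (ne_of_gt hi1) (by positivity),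
          div_le_div_iff₀ (by positivity) (by positivity)]
        nlinarith [mul_nonneg (mul_nonneg hρ0 hz0.le)
            (mul_nonneg (sub_nonneg.2 hzn) hi1.le),
          mul_nonneg hK (mul_nonneg (sub_nonneg.2 hzn)
            (by positivity : (0:ℝ) ≤ ‖z‖ + ((i:ℝ)+1)))]
  -- bound on ‖u‖^2
  have hun : ‖u‖^2 ≤ ‖w‖^2/((i:ℝ)+1)^2 := by
    rw [hu, norm_div]
    rw [div_pow]
    apply div_le_div_of_nonneg_left (by positivity) (by positivity)
    · apply pow_le_pow_left₀ (by positivity) hzn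
  -- square bound
  have hsq : ‖1 + u‖^2 = 1 + 2*u.re + ‖u‖^2 := by
    rw [Complex.sq_norm, Complex.normSq_apply]
    have h1 : (1+u).re = 1 + u.re := by simp
    have h2 : (1+u).im = u.im := by simp
    rw [h1, h2]
    have h3 : ‖u‖^2 = u.re^2 + u.im^2 := by
      rw [Complex.sq_norm, Complex.normSq_apply]; ring
    rw [h3]; ring
  have hR0 : 0 ≤ 1 + ρ/((i:ℝ)+1) + B/((i:ℝ)+1)^2 := by positivity
  have hfin : ‖1 + u‖^2 ≤ (1 + ρ/((i:ℝ)+1) + B/((i:ℝ)+1)^2)^2 := by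
    rw [hsq]
    have hBexp : B/((i:ℝ)+1)^2 = (ρ*‖d‖ + ‖w‖*‖d‖)/((i:ℝ)+1)^2 + (‖w‖^2/2)/((i:ℝ)+1)^2 := by
      rw [hB]; ring
    have expand : (1 + ρ/((i:ℝ)+1) + B/((i:ℝ)+1)^2)^2
        = 1 + 2*(ρ/((i:ℝ)+1)) + 2*(B/((i:ℝ)+1)^2)
          + (ρ/((i:ℝ)+1) + B/((i:ℝ)+1)^2)^2 := by ring
    have hw2 : ‖w‖^2/((i:ℝ)+1)^2 = 2*((‖w‖^2/2)/((i:ℝ)+1)^2) := by ring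
    rw [expand]
    linarith [hure, hun, sq_nonneg (ρ/((i:ℝ)+1) + B/((i:ℝ)+1)^2)]
  calc ‖1 + u‖ = Real.sqrt (‖1+u‖^2) := by rw [Real.sqrt_sq (norm_nonneg _)]
  _ ≤ Real.sqrt ((1 + ρ/((i:ℝ)+1) + B/((i:ℝ)+1)^2)^2) := Real.sqrt_le_sqrt hfin
  _ = _ := Real.sqrt_sq hR0


lemma poch_succ (x : ℂ) (k : ℕ) : poch x (k+1) = poch x k * (x + k) :=
  Finset.prod_range_succ _ _

lemma poch_ne_zero {x : ℂ} (hx : ∀ m : ℕ, x ≠ -(m : ℂ)) (k : ℕ) : poch x k ≠ 0 := by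
  rw [poch]
  apply Finset.prod_ne_zero_iff.2
  intro i _
  intro hcon
  exact hx i (eq_neg_of_add_eq_zero_left hcon)

lemma main_aux (a b c e d w : ℂ) (hcd : c = d + w) (hw : w = e - a - b - 1)
    (hre : 0 < (e - a - b).re)
    (he : ∀ m : ℕ, e ≠ -(m : ℂ)) (hc : ∀ m : ℕ, c ≠ -(m : ℂ))
    (hd : ∀ m : ℕ, d ≠ -(m : ℂ)) :
    (∀ n : ℕ, Summable fun k : ℕ =>
      ‖poch a k * poch b k * poch (c + n) k /
        (poch e k * poch (d + n) k * (Nat.factorial k : ℂ))‖) ∧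
    (Summable fun k : ℕ => ‖poch a k * poch b k / (poch e k * (Nat.factorial k : ℂ))‖) ∧
    Tendsto (fun n : ℕ =>
        ∑' k : ℕ, poch a k * poch b k * poch (c + n) k /
          (poch e k * poch (d + n) k * (Nat.factorial k : ℂ)))
      atTop
      (nhds (∑' k : ℕ, poch a k * poch b k / (poch e k * (Nat.factorial k : ℂ)))) := by
  have hδ : (e - a - b).re = w.re + 1 := by rw [hw]; simp [Complex.sub_re, Complex.one_re]
  set ρ : ℝ := max w.re 0 with hρ
  set B : ℝ := ρ * ‖d‖ + ‖w‖*‖d‖ + ‖w‖^2/2 with hB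
  have hρ0 : 0 ≤ ρ := le_max_right _ _
  have hB0 : 0 ≤ B := by
    have := norm_nonneg w; have := norm_nonneg d
    rw [hB]; positivity
  set Q : ℕ → ℝ := fun i => 1 + ρ/((i:ℝ)+1) + B/((i:ℝ)+1)^2 with hQ
  have hQ1 : ∀ i, 1 ≤ Q i := by
    intro i; rw [hQ]
    have h1 : 0 ≤ ρ/((i:ℝ)+1) := by positivity
    have h2 : 0 ≤ B/((i:ℝ)+1)^2 := by positivity
    simp only []
    linarith
  -- the F-sequences and t-sequence
  set F : ℕ → ℕ → ℂ := fun n k => poch a k * poch b k * poch (c + n) k /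
      (poch e k * poch (d + n) k * (Nat.factorial k : ℂ)) with hF
  set t : ℕ → ℂ := fun k => poch a k * poch b k / (poch e k * (Nat.factorial k : ℂ)) with ht
  set P : ℕ → ℝ := fun k => ∏ i ∈ Finset.range k, Q i with hP
  set g : ℕ → ℝ := fun k => ‖t k‖ * P k with hg
  -- nonvanishing
  have hek : ∀ k, poch e k ≠ 0 := poch_ne_zero he
  have hdnk : ∀ (n : ℕ) k, poch (d + n) k ≠ 0 := by
    intro n
    apply poch_ne_zero
    intro m hcon
    apply hd (n + m)
    push_cast
    linear_combination hcon
  have hfk : ∀ k : ℕ, ((Nat.factorial k : ℂ)) ≠ 0 :=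
    fun k => Nat.cast_ne_zero.2 (Nat.factorial_ne_zero k)
  -- identity A+B : F n k = t k * ∏ ratios
  have hid : ∀ n k, F n k = t k * ∏ i ∈ Finset.range k, ((c + n + i)/(d + n + i)) := by
    intro n k
    rw [hF, ht]
    simp only []
    rw [show (∏ i ∈ Finset.range k, ((c + n + i)/(d + n + i)))
        = poch (c+n) k / poch (d+n) k by
      rw [poch, poch, ← Finset.prod_div_distrib]]
    rw [div_mul_div_comm]
    congr 1 <;> ring
  -- norm-ratio recursion
  have hstep : ∀ n k, ‖F n (k+1)‖ = ‖F n k‖ *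
      (‖a+(k:ℂ)‖ * ‖b+(k:ℂ)‖ * (‖c+(n:ℂ)+(k:ℂ)‖/‖d+(n:ℂ)+(k:ℂ)‖) /
        (‖e+(k:ℂ)‖ * ((k:ℝ)+1))) := by
    intro n k
    have hidc : F n (k+1) = F n k *
        ((a+(k:ℂ)) * (b+(k:ℂ)) * ((c+(n:ℂ)+(k:ℂ))/(d+(n:ℂ)+(k:ℂ))) /
          ((e+(k:ℂ)) * (((k:ℕ):ℂ)+1))) := by
      rw [hF]
      simp only []
      rw [poch_succ, poch_succ, poch_succ, poch_succ, poch_succ,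
        show ((Nat.factorial (k+1) : ℂ)) = (((k:ℕ):ℂ)+1) * (Nat.factorial k : ℂ) by
          rw [Nat.factorial_succ]; push_cast; ring]
      simp only [div_eq_mul_inv, mul_inv]
      ring
    rw [hidc, norm_mul]
    congr 1
    rw [norm_div, norm_mul, norm_mul, norm_mul, norm_div]
    congr 2
    rw [show ((((k:ℕ):ℂ))+1) = (((k+1:ℕ)):ℂ) by push_cast; ring, Complex.norm_natCast]
    push_cast; ring
  -- basic facts
  have hdni : ∀ n i : ℕ, d + (n:ℂ) + (i:ℂ) ≠ 0 := by
    intro n i hcon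
    apply hd (n+i)
    push_cast
    linear_combination hcon
  have h2re : e.re - a.re - b.re = w.re + 1 := by
    simpa [Complex.sub_re] using hδ
  have hcre : c.re = d.re + w.re := by rw [hcd]; simp [Complex.add_re]
  have hP1 : ∀ k, 1 ≤ P k := by
    intro k
    have h1 : ∏ i ∈ Finset.range k, (1:ℝ) ≤ ∏ i ∈ Finset.range k, Q i :=
      Finset.prod_le_prod (fun i _ => zero_le_one) (fun i _ => hQ1 i)
    rw [Finset.prod_const_one] at h1
    rw [hP]
    exact h1
  have hgnn : ∀ k, 0 ≤ g k := by
    intro k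
    rw [hg]
    exact mul_nonneg (norm_nonneg _) (le_trans zero_le_one (hP1 k))
  -- component 1
  have comp1 : ∀ n, Summable (fun k => ‖F n k‖) := by
    intro n
    apply summable_of_eventual_ratio _ (fun k => norm_nonneg _) (3/2) (by norm_num)
    have hq : Tendsto (fun k : ℕ =>
        (k:ℝ) * (‖c+(n:ℂ)+(k:ℂ)‖/‖d+(n:ℂ)+(k:ℂ)‖ - 1)) atTop
        (nhds ((c+(n:ℂ)).re - (d+(n:ℂ)).re)) :=
      q_ratio_tendsto (c+(n:ℂ)) (d+(n:ℂ)) (fun k => hdni n k)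
    have hr := tendsto_ratio_aux a b e
      (fun k : ℕ => ‖c+(n:ℂ)+(k:ℂ)‖/‖d+(n:ℂ)+(k:ℂ)‖) _ hq
    have hlim : a.re + b.re - e.re - 1 + ((c+(n:ℂ)).re - (d+(n:ℂ)).re) = -2 := by
      simp only [Complex.add_re, Complex.natCast_re]
      linarith
    rw [hlim] at hr
    have hb := eventual_ratio_bound _ (3/2) (-2) (by norm_num) hr (by norm_num)
    filter_upwards [hb] with k hk
    rw [hstep n k]
    exact mul_le_mul_of_nonneg_left hk (norm_nonneg _)
  -- g ratio step
  have hstepg : ∀ k, g (k+1) = g k *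
      (‖a+(k:ℂ)‖ * ‖b+(k:ℂ)‖ * Q k / (‖e+(k:ℂ)‖ * ((k:ℝ)+1))) := by
    intro k
    have hidt : t (k+1) = t k * ((a+(k:ℂ))*(b+(k:ℂ))/((e+(k:ℂ))*(((k:ℕ):ℂ)+1))) := by
      rw [ht]
      simp only []
      rw [poch_succ, poch_succ, poch_succ,
        show ((Nat.factorial (k+1) : ℂ)) = (((k:ℕ):ℂ)+1) * (Nat.factorial k : ℂ) by
          rw [Nat.factorial_succ]; push_cast; ring]
      simp only [div_eq_mul_inv, mul_inv]
      ring
    have htnorm : ‖t (k+1)‖ = ‖t k‖ * (‖a+(k:ℂ)‖*‖b+(k:ℂ)‖/(‖e+(k:ℂ)‖*((k:ℝ)+1))) := by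
      rw [hidt, norm_mul]
      congr 1
      rw [norm_div, norm_mul, norm_mul]
      congr 1
      rw [show ((((k:ℕ):ℂ))+1) = (((k+1:ℕ)):ℂ) by push_cast; ring, Complex.norm_natCast]
      push_cast; ring
    rw [hg]
    simp only []
    rw [hP]
    simp only []
    rw [Finset.prod_range_succ, htnorm]
    ring
  -- summability of g
  have hsumg : Summable g := by
    set p : ℝ := 1 + (min (e-a-b).re 1)/2 with hp'
    have hmin0 : 0 < min (e-a-b).re 1 := lt_min hre one_pos
    have hp : 1 < p := by rw [hp']; linarith
    apply summable_of_eventual_ratio g hgnn p hp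
    have hq : Tendsto (fun k : ℕ => (k:ℝ) * (Q k - 1)) atTop (nhds ρ) := by
      have := q_poly_tendsto ρ B
      apply this.congr
      intro k
      rw [hQ]
    have hr := tendsto_ratio_aux a b e Q ρ hq
    have hL2 : a.re + b.re - e.re - 1 + ρ < -p := by
      have hm1 := min_le_left ((e-a-b).re) 1
      have hm2 := min_le_right ((e-a-b).re) 1
      have hδ2 : (e-a-b).re = w.re + 1 := hδ
      rw [hρ, hp']
      rcases le_total w.re 0 with hcase | hcase
      · rw [max_eq_right hcase]
        rw [hδ2] at hm1 hmin0 ⊢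
        linarith
      · rw [max_eq_left hcase]
        rw [hδ2] at hm2 hmin0 ⊢
        have : min (w.re+1) 1 = 1 := min_eq_right (by linarith)
        rw [this]
        linarith
    have hb := eventual_ratio_bound _ p _ hp.le hr hL2
    filter_upwards [hb] with k hk
    rw [hstepg k]
    exact mul_le_mul_of_nonneg_left hk (hgnn k)
  -- component 2
  have comp2 : Summable (fun k => ‖t k‖) := by
    apply Summable.of_nonneg_of_le (fun k => norm_nonneg _) _ hsumg
    intro k
    rw [hg]
    exact le_mul_of_one_le_right (norm_nonneg _) (hP1 k)
  refine ⟨comp1, comp2, ?_⟩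
  -- component 3
  have hab : ∀ k, Tendsto (fun n => F n k) atTop (nhds (t k)) := by
    intro k
    have hprod : Tendsto (fun n : ℕ => ∏ i ∈ Finset.range k,
        ((c+(n:ℂ)+(i:ℂ))/(d+(n:ℂ)+(i:ℂ)))) atTop (nhds (∏ i ∈ Finset.range k, 1)) := by
      apply tendsto_finset_prod
      intro i _
      have hfac : Tendsto (fun n : ℕ => w/(d+(n:ℂ)+(i:ℂ))) atTop (nhds 0) := by
        apply tendsto_zero_iff_norm_tendsto_zero.2
        have hden : Tendsto (fun n : ℕ => ‖d+(n:ℂ)+(i:ℂ)‖) atTop atTop := by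
          apply tendsto_atTop_mono' atTop ?_
            (tendsto_atTop_add_const_right atTop (-‖d+(i:ℂ)‖) tendsto_natCast_atTop_atTop)
          filter_upwards with n
          have := norm_sub_norm_le ((n:ℂ)) (-(d+(i:ℂ)))
          rw [sub_neg_eq_add, norm_neg, Complex.norm_natCast] at this
          calc (n:ℝ) + -‖d+(i:ℂ)‖ ≤ ‖(n:ℂ) + (d+(i:ℂ))‖ := by linarith
          _ = ‖d+(n:ℂ)+(i:ℂ)‖ := by ring_nf
        have := Tendsto.div_atTop (tendsto_const_nhds (x := ‖w‖)) hden
        apply this.congr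
        intro n
        rw [norm_div]
      have heq : ∀ n : ℕ, (c+(n:ℂ)+(i:ℂ))/(d+(n:ℂ)+(i:ℂ)) = 1 + w/(d+(n:ℂ)+(i:ℂ)) := by
        intro n
        rw [hcd]
        field_simp [hdni n i]
        ring
      have := (tendsto_const_nhds (x := (1:ℂ))).add hfac
      rw [add_zero] at this
      exact this.congr (fun n => (heq n).symm)
    rw [Finset.prod_const_one] at hprod
    have := (tendsto_const_nhds (x := t k)).mul hprod
    rw [mul_one] at this
    exact this.congr (fun n => (hid n k).symm)
  have hbound : ∀ᶠ n : ℕ in atTop, ∀ k, ‖F n k‖ ≤ g k := by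
    filter_upwards [eventually_ge_atTop (Nat.ceil ‖d‖ + 1)] with n hn k
    rw [hid n k, norm_mul, hg]
    apply mul_le_mul_of_nonneg_left _ (norm_nonneg _)
    rw [norm_prod, hP]
    apply Finset.prod_le_prod (fun i _ => norm_nonneg _)
    intro i _
    have hcond : ‖d‖ + ((i:ℝ)+1) ≤ (n:ℝ) + i := by
      have h1 : ‖d‖ ≤ (Nat.ceil ‖d‖ : ℝ) := Nat.le_ceil _
      have h2 : ((Nat.ceil ‖d‖ + 1 : ℕ):ℝ) ≤ n := Nat.cast_le.2 hn
      push_cast at h2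
      linarith
    have hfb := factor_bound w d n i hcond
    rw [hcd]
    exact hfb
  exact tendsto_tsum_of_dominated_convergence hsumg hab hbound

theorem saalschutz_limit_lemma (a b c e : ℂ) (hre : 0 < (e - a - b).re)
    (he : ∀ m : ℕ, e ≠ -(m : ℂ)) (hc : ∀ m : ℕ, c ≠ -(m : ℂ))
    (habce : ∀ m : ℕ, a + b + c - e + 1 ≠ -(m : ℂ)) :
    (∀ n : ℕ, Summable fun k : ℕ =>
      ‖poch a k * poch b k * poch (c + n) k /
        (poch e k * poch (a + b + c - e + 1 + n) k * (Nat.factorial k : ℂ))‖) ∧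
    (Summable fun k : ℕ => ‖poch a k * poch b k / (poch e k * (Nat.factorial k : ℂ))‖) ∧
    Tendsto (fun n : ℕ =>
        ∑' k : ℕ, poch a k * poch b k * poch (c + n) k /
          (poch e k * poch (a + b + c - e + 1 + n) k * (Nat.factorial k : ℂ)))
      atTop
      (nhds (∑' k : ℕ, poch a k * poch b k / (poch e k * (Nat.factorial k : ℂ)))) := by
  exact main_aux a b c e (a + b + c - e + 1) (e - a - b - 1) (by ring) rfl hre he hc habce
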